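/- (Lemma 2, pressure estimate.) Fix x* > 0, t₁ > 0 and a sensor location x_m with 0 < x_m ≤ x*, and let u, v : [0,x*] → ℝ be continuous. Then for every t ∈ [t₁, min(τ*_u, τ*_v)], |p^u(x_m, t) − p^v(x_m, t)| ≤ (x*/t₁)·M_{u,v}³·(2x* + C_{u,v})·‖u − v‖, where M_{u,v} = exp(max(‖u‖,‖v‖)) and C_{u,v} = exp((x*)⁴·M_{u,v}⁶/t₁²)·(x*)⁵·M_{u,v}⁶/t₁². -/

import Mathlib

open Set
set_option maxHeartbeats 4000000

noncomputable def Fu (xs : ℝ) (h : 0 ≤ xs) (u : C(Icc (0:ℝ) xs, ℝ)) (x : ℝ) : ℝ :=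
  ∫ z in (0:ℝ)..x, Real.exp (-(u (projIcc 0 xs h z)))

noncomputable def Wu (xs : ℝ) (h : 0 ≤ xs) (u : C(Icc (0:ℝ) xs, ℝ)) (x : ℝ) : ℝ :=
  ∫ ξ in (0:ℝ)..x, Fu xs h u ξ

noncomputable def tau (xs : ℝ) (h : 0 ≤ xs) (u : C(Icc (0:ℝ) xs, ℝ)) : ℝ :=
  Wu xs h u xs


/-- Dimensionless pressure, given the moving front `Υ`:
`p(x,t) = 2 - F_u(x)/F_u(Υ(t))` behind the front (`x ≤ Υ t`) and `1` ahead of it. -/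
noncomputable def press (xs : ℝ) (h : 0 ≤ xs) (u : C(Icc (0:ℝ) xs, ℝ)) (Υ : ℝ → ℝ)
    (x t : ℝ) : ℝ :=
  if x ≤ Υ t then 2 - Fu xs h u x / Fu xs h u (Υ t) else 1

private lemma exp_sub_exp_le (x y : ℝ) :
    |Real.exp x - Real.exp y| ≤ Real.exp (max x y) * |x - y| := by
  wlog hxy : y ≤ x generalizing x y with H
  · rw [abs_sub_comm, max_comm, abs_sub_comm x y]
    exact H y x (le_of_not_ge hxy)
  have h1 : Real.exp (y - x) * Real.exp x = Real.exp y := by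
    rw [← Real.exp_add]; ring_nf
  have h2 := Real.add_one_le_exp (y - x)
  have h3 := (Real.exp_pos x).le
  rw [abs_of_nonneg (sub_nonneg.2 (Real.exp_le_exp.2 hxy)), max_eq_left hxy,
    abs_of_nonneg (sub_nonneg.2 hxy)]
  nlinarith

section aux
variable {xs : ℝ} (h : 0 ≤ xs) (u v : C(Icc (0:ℝ) xs, ℝ))

private lemma g_cont : Continuous fun z => Real.exp (-(u (projIcc 0 xs h z))) :=
  Real.continuous_exp.comp (u.continuous.comp continuous_projIcc).neg

private lemma g_le (z : ℝ) : Real.exp (-(u (projIcc 0 xs h z))) ≤ Real.exp ‖u‖ := by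
  have h1 : |u (projIcc 0 xs h z)| ≤ ‖u‖ := u.norm_coe_le_norm _
  exact Real.exp_le_exp.2 (by linarith [(abs_le.1 h1).1])

private lemma g_ge (z : ℝ) : Real.exp (-‖u‖) ≤ Real.exp (-(u (projIcc 0 xs h z))) := by
  have h1 : |u (projIcc 0 xs h z)| ≤ ‖u‖ := u.norm_coe_le_norm _
  exact Real.exp_le_exp.2 (by linarith [(abs_le.1 h1).2])

private lemma Fu_sub (a b : ℝ) :
    Fu xs h u b - Fu xs h u a = ∫ z in a..b, Real.exp (-(u (projIcc 0 xs h z))) :=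
  intervalIntegral.integral_interval_sub_left ((g_cont h u).intervalIntegrable 0 b)
    ((g_cont h u).intervalIntegrable 0 a)

private lemma Fu_sub_ge {a b : ℝ} (hab : a ≤ b) :
    (b - a) * Real.exp (-‖u‖) ≤ Fu xs h u b - Fu xs h u a := by
  rw [Fu_sub]
  calc (b - a) * Real.exp (-‖u‖) = ∫ _ in a..b, Real.exp (-‖u‖) := by
        rw [intervalIntegral.integral_const, smul_eq_mul]
    _ ≤ ∫ z in a..b, Real.exp (-(u (projIcc 0 xs h z))) :=
        intervalIntegral.integral_mono_on hab intervalIntegrable_const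
          ((g_cont h u).intervalIntegrable a b) (fun z _ => g_ge h u z)

private lemma Fu_sub_le {a b : ℝ} (hab : a ≤ b) :
    Fu xs h u b - Fu xs h u a ≤ (b - a) * Real.exp ‖u‖ := by
  rw [Fu_sub]
  calc (∫ z in a..b, Real.exp (-(u (projIcc 0 xs h z))))
      ≤ ∫ _ in a..b, Real.exp ‖u‖ :=
        intervalIntegral.integral_mono_on hab ((g_cont h u).intervalIntegrable a b)
          intervalIntegrable_const (fun z _ => g_le h u z)
    _ = (b - a) * Real.exp ‖u‖ := by rw [intervalIntegral.integral_const, smul_eq_mul]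

private lemma Fu_zero : Fu xs h u 0 = 0 := intervalIntegral.integral_same

private lemma Fu_ge {x : ℝ} (hx : 0 ≤ x) : x * Real.exp (-‖u‖) ≤ Fu xs h u x := by
  have := Fu_sub_ge h u hx
  rw [Fu_zero] at this; linarith

private lemma Fu_le {x : ℝ} (hx : 0 ≤ x) : Fu xs h u x ≤ x * Real.exp ‖u‖ := by
  have := Fu_sub_le h u hx
  rw [Fu_zero] at this; linarith

private lemma Fu_mono {a b : ℝ} (ha : 0 ≤ a) (hab : a ≤ b) : Fu xs h u a ≤ Fu xs h u b := by
  have := Fu_sub_ge h u hab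
  nlinarith [(Real.exp_pos (-‖u‖)).le, sub_nonneg.2 hab, mul_nonneg (sub_nonneg.2 hab) (Real.exp_pos (-‖u‖)).le]

private lemma Fu_nonneg {x : ℝ} (hx : 0 ≤ x) : 0 ≤ Fu xs h u x := by
  have := Fu_mono h u le_rfl hx
  rwa [Fu_zero] at this

private lemma Fu_close {x : ℝ} (hx : 0 ≤ x) :
    |Fu xs h u x - Fu xs h v x| ≤ x * (Real.exp (max ‖u‖ ‖v‖) * ‖u - v‖) := by
  have key : Fu xs h u x - Fu xs h v x
      = ∫ z in (0:ℝ)..x, (Real.exp (-(u (projIcc 0 xs h z))) - Real.exp (-(v (projIcc 0 xs h z)))) :=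
    (intervalIntegral.integral_sub ((g_cont h u).intervalIntegrable 0 x)
      ((g_cont h v).intervalIntegrable 0 x)).symm
  rw [key, ← Real.norm_eq_abs]
  have hb : ∀ z ∈ Set.uIoc (0:ℝ) x,
      ‖Real.exp (-(u (projIcc 0 xs h z))) - Real.exp (-(v (projIcc 0 xs h z)))‖
        ≤ Real.exp (max ‖u‖ ‖v‖) * ‖u - v‖ := by
    intro z _
    set y := projIcc 0 xs h z
    rw [Real.norm_eq_abs]
    have h1 := exp_sub_exp_le (-(u y)) (-(v y))
    have h2 : Real.exp (max (-(u y)) (-(v y))) ≤ Real.exp (max ‖u‖ ‖v‖) := by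
      apply Real.exp_le_exp.2
      apply max_le
      · exact le_trans (by linarith [(abs_le.1 (u.norm_coe_le_norm y)).1]) (le_max_left _ _)
      · exact le_trans (by linarith [(abs_le.1 (v.norm_coe_le_norm y)).1]) (le_max_right _ _)
    have h3 : |(-(u y)) - (-(v y))| ≤ ‖u - v‖ := by
      have : (-(u y)) - (-(v y)) = -((u - v) y) := by
        simp [ContinuousMap.sub_apply]; ring
      rw [this, abs_neg]
      exact (u - v).norm_coe_le_norm y
    calc |Real.exp (-(u y)) - Real.exp (-(v y))|
        ≤ Real.exp (max (-(u y)) (-(v y))) * |(-(u y)) - (-(v y))| := h1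
      _ ≤ Real.exp (max ‖u‖ ‖v‖) * ‖u - v‖ :=
          mul_le_mul h2 h3 (abs_nonneg _) (Real.exp_pos _).le
  calc ‖∫ z in (0:ℝ)..x, (Real.exp (-(u (projIcc 0 xs h z))) - Real.exp (-(v (projIcc 0 xs h z))))‖
      ≤ Real.exp (max ‖u‖ ‖v‖) * ‖u - v‖ * |x - 0| :=
        intervalIntegral.norm_integral_le_of_norm_le_const hb
    _ = x * (Real.exp (max ‖u‖ ‖v‖) * ‖u - v‖) := by
        rw [sub_zero, abs_of_nonneg hx]; ring

private lemma Fu_cont : Continuous (Fu xs h u) :=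
  intervalIntegral.continuous_primitive (fun a b => (g_cont h u).intervalIntegrable a b) 0

private lemma Wu_sub (a b : ℝ) :
    Wu xs h u b - Wu xs h u a = ∫ ξ in a..b, Fu xs h u ξ :=
  intervalIntegral.integral_interval_sub_left ((Fu_cont h u).intervalIntegrable 0 b)
    ((Fu_cont h u).intervalIntegrable 0 a)

private lemma Wu_zero : Wu xs h u 0 = 0 := intervalIntegral.integral_same

private lemma Wu_sub_ge {a b : ℝ} (ha : 0 ≤ a) (hab : a ≤ b) :
    (b - a) * Fu xs h u a ≤ Wu xs h u b - Wu xs h u a := by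
  rw [Wu_sub]
  calc (b - a) * Fu xs h u a = ∫ _ in a..b, Fu xs h u a := by
        rw [intervalIntegral.integral_const, smul_eq_mul]
    _ ≤ ∫ ξ in a..b, Fu xs h u ξ :=
        intervalIntegral.integral_mono_on hab intervalIntegrable_const
          ((Fu_cont h u).intervalIntegrable a b) (fun ξ hξ => Fu_mono h u ha hξ.1)

private lemma Wu_sub_le {a b : ℝ} (ha : 0 ≤ a) (hab : a ≤ b) :
    Wu xs h u b - Wu xs h u a ≤ (b - a) * Fu xs h u b := by
  rw [Wu_sub]
  calc (∫ ξ in a..b, Fu xs h u ξ)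
      ≤ ∫ _ in a..b, Fu xs h u b :=
        intervalIntegral.integral_mono_on hab ((Fu_cont h u).intervalIntegrable a b)
          intervalIntegrable_const (fun ξ hξ => Fu_mono h u (le_trans ha hξ.1) hξ.2)
    _ = (b - a) * Fu xs h u b := by rw [intervalIntegral.integral_const, smul_eq_mul]

private lemma Wu_close {x : ℝ} (hx : 0 ≤ x) (hxx : x ≤ xs) :
    |Wu xs h u x - Wu xs h v x| ≤ xs * (Real.exp (max ‖u‖ ‖v‖) * ‖u - v‖) * x := by
  have key : Wu xs h u x - Wu xs h v x
      = ∫ ξ in (0:ℝ)..x, (Fu xs h u ξ - Fu xs h v ξ) :=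
    (intervalIntegral.integral_sub ((Fu_cont h u).intervalIntegrable 0 x)
      ((Fu_cont h v).intervalIntegrable 0 x)).symm
  rw [key, ← Real.norm_eq_abs]
  have hb : ∀ ξ ∈ Set.uIoc (0:ℝ) x,
      ‖Fu xs h u ξ - Fu xs h v ξ‖ ≤ xs * (Real.exp (max ‖u‖ ‖v‖) * ‖u - v‖) := by
    intro ξ hξ
    rw [Set.uIoc_of_le hx] at hξ
    rw [Real.norm_eq_abs]
    calc |Fu xs h u ξ - Fu xs h v ξ| ≤ ξ * (Real.exp (max ‖u‖ ‖v‖) * ‖u - v‖) :=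
          Fu_close h u v hξ.1.le
      _ ≤ xs * (Real.exp (max ‖u‖ ‖v‖) * ‖u - v‖) := by
          apply mul_le_mul_of_nonneg_right (le_trans hξ.2 hxx)
          positivity
  calc ‖∫ ξ in (0:ℝ)..x, (Fu xs h u ξ - Fu xs h v ξ)‖
      ≤ xs * (Real.exp (max ‖u‖ ‖v‖) * ‖u - v‖) * |x - 0| :=
        intervalIntegral.norm_integral_le_of_norm_le_const hb
    _ = xs * (Real.exp (max ‖u‖ ‖v‖) * ‖u - v‖) * x := by rw [sub_zero, abs_of_nonneg hx]

end aux

private lemma arith1 (xs t₁ M ε E : ℝ) (hxs : 0 < xs) (ht₁ : 0 < t₁) (hM : 1 ≤ M)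
    (hε : 0 ≤ ε) (hE : 1 ≤ E) (hts : t₁ ≤ xs^2*M) :
    (xs*M*ε + (xs*M*ε + xs^3*M^4*ε/t₁)) * (xs*M^2/t₁) ≤
      xs / t₁ * M ^ 3 * (2 * xs + E * (xs ^ 5 * M ^ 6 / t₁ ^ 2)) * ε := by
  have hM0 : (0:ℝ) < M := lt_of_lt_of_le one_pos hM
  have key : xs^4*M^6*ε*t₁ ≤ E*(xs^6*M^9*ε) := by
    have k1 : xs^4*M^6*ε*t₁ ≤ xs^4*M^6*ε*(xs^2*M) :=
      mul_le_mul_of_nonneg_left hts (by positivity)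
    have hEM : (1:ℝ) ≤ E*M^2 := by nlinarith
    have k2 : xs^6*M^7*ε*1 ≤ xs^6*M^7*ε*(E*M^2) :=
      mul_le_mul_of_nonneg_left hEM (by positivity)
    nlinarith
  rw [← sub_nonneg]
  have hexp : xs / t₁ * M ^ 3 * (2 * xs + E * (xs ^ 5 * M ^ 6 / t₁ ^ 2)) * ε
      - (xs*M*ε + (xs*M*ε + xs^3*M^4*ε/t₁)) * (xs*M^2/t₁)
      = (E*(xs^6*M^9*ε) - xs^4*M^6*ε*t₁)/t₁^3 := by
    field_simp
    ring
  rw [hexp]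
  exact div_nonneg (sub_nonneg.2 key) (by positivity)

private lemma arith2 (xs t₁ M ε E D : ℝ) (hxs : 0 < xs) (ht₁ : 0 < t₁) (hM : 1 ≤ M)
    (hε : 0 ≤ ε) (hE : 1 ≤ E) (hts : t₁ ≤ xs^2*M) (hD : D * t₁^2 ≤ xs^4*M^6*ε) :
    D ≤ xs / t₁ * M ^ 3 * (2 * xs + E * (xs ^ 5 * M ^ 6 / t₁ ^ 2)) * ε := by
  have hM0 : (0:ℝ) < M := lt_of_lt_of_le one_pos hM
  have key : xs^4*M^6*ε*t₁ ≤ E*(xs^6*M^9*ε) := by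
    have k1 : xs^4*M^6*ε*t₁ ≤ xs^4*M^6*ε*(xs^2*M) :=
      mul_le_mul_of_nonneg_left hts (by positivity)
    have hEM : (1:ℝ) ≤ E*M^2 := by nlinarith
    have k2 : xs^6*M^7*ε*1 ≤ xs^6*M^7*ε*(E*M^2) :=
      mul_le_mul_of_nonneg_left hEM (by positivity)
    nlinarith
  have key2 : D*t₁^3 ≤ 2*xs^2*M^3*ε*t₁^2 + E*(xs^6*M^9*ε) := by
    nlinarith [mul_le_mul_of_nonneg_right hD ht₁.le,
      mul_nonneg (mul_nonneg (mul_nonneg (by positivity : (0:ℝ) ≤ 2*xs^2) (by positivity : (0:ℝ) ≤ M^3)) hε) (by positivity : (0:ℝ) ≤ t₁^2)]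
  rw [← sub_nonneg]
  have hexp : xs / t₁ * M ^ 3 * (2 * xs + E * (xs ^ 5 * M ^ 6 / t₁ ^ 2)) * ε - D
      = (2*xs^2*M^3*ε*t₁^2 + E*(xs^6*M^9*ε) - D*t₁^3)/t₁^3 := by
    field_simp
  rw [hexp]
  exact div_nonneg (by linarith) (by positivity)

/-- Lemma 2, pressure estimate: for `t ∈ [t₁, min(τ*_u, τ*_v)]` and a
sensor location `0 < x_m ≤ x*`,
`|p^u(x_m,t) - p^v(x_m,t)| ≤ (x*/t₁)·M³·(2x* + C_{u,v})·‖u - v‖`. -/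
theorem stmt_12 (xs : ℝ) (hxs : 0 < xs) (t₁ : ℝ) (ht₁ : 0 < t₁)
    (xm : ℝ) (hxm0 : 0 < xm) (hxm : xm ≤ xs)
    (u v : C(Icc (0:ℝ) xs, ℝ)) (Υu Υv : ℝ → ℝ)
    (hΥu : ∀ s ∈ Icc (0:ℝ) (tau xs hxs.le u), Υu s ∈ Icc 0 xs ∧ Wu xs hxs.le u (Υu s) = s)
    (hΥv : ∀ s ∈ Icc (0:ℝ) (tau xs hxs.le v), Υv s ∈ Icc 0 xs ∧ Wu xs hxs.le v (Υv s) = s)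
    (t : ℝ) (ht : t ∈ Icc t₁ (min (tau xs hxs.le u) (tau xs hxs.le v))) :
    |press xs hxs.le u Υu xm t - press xs hxs.le v Υv xm t| ≤
      xs / t₁ * Real.exp (max ‖u‖ ‖v‖) ^ 3 *
        (2 * xs +
          Real.exp (xs ^ 4 * Real.exp (max ‖u‖ ‖v‖) ^ 6 / t₁ ^ 2) *
            (xs ^ 5 * Real.exp (max ‖u‖ ‖v‖) ^ 6 / t₁ ^ 2)) * ‖u - v‖ := by
  have h : (0:ℝ) ≤ xs := hxs.le
  simp only [press]
  obtain ⟨htt₁, htmin⟩ := ht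
  have htu : t ≤ tau xs h u := le_trans htmin (min_le_left _ _)
  have htv : t ≤ tau xs h v := le_trans htmin (min_le_right _ _)
  have ht0 : (0:ℝ) ≤ t := le_trans ht₁.le htt₁
  obtain ⟨ha, hWa⟩ := hΥu t ⟨ht0, htu⟩
  obtain ⟨hb, hWb⟩ := hΥv t ⟨ht0, htv⟩
  set a := Υu t with ha'
  set b := Υv t with hb'
  set M := Real.exp (max ‖u‖ ‖v‖) with hMdef
  set ε := ‖u - v‖ with hεdef
  set E := Real.exp (xs ^ 4 * M ^ 6 / t₁ ^ 2) with hEdef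
  have hM1 : (1:ℝ) ≤ M := Real.one_le_exp (le_trans (norm_nonneg u) (le_max_left _ _))
  have hM0 : (0:ℝ) < M := lt_of_lt_of_le one_pos hM1
  have hε0 : (0:ℝ) ≤ ε := norm_nonneg _
  have hE1 : (1:ℝ) ≤ E := Real.one_le_exp (by positivity)
  have heu : Real.exp ‖u‖ ≤ M := Real.exp_le_exp.2 (le_max_left _ _)
  have hev : Real.exp ‖v‖ ≤ M := Real.exp_le_exp.2 (le_max_right _ _)
  have heu' : M⁻¹ ≤ Real.exp (-‖u‖) := by
    rw [Real.exp_neg]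
    exact inv_anti₀ (Real.exp_pos _) heu
  have hev' : M⁻¹ ≤ Real.exp (-‖v‖) := by
    rw [Real.exp_neg]
    exact inv_anti₀ (Real.exp_pos _) hev
  have ha0 : 0 ≤ a := ha.1
  have haxs : a ≤ xs := ha.2
  have hb0 : 0 ≤ b := hb.1
  have hbxs : b ≤ xs := hb.2
  have hWua : Wu xs h u a = t := hWa
  have hWvb : Wu xs h v b = t := hWb
  -- upper bounds on t via W ≤ x·F, giving lower bounds on the fronts
  have hta : t ≤ a * (xs * M) := by
    have h1 := Wu_sub_le h u le_rfl ha0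
    rw [Wu_zero, hWua, sub_zero, sub_zero] at h1
    have h2 : Fu xs h u a ≤ xs * M :=
      le_trans (Fu_le h u ha0) (mul_le_mul haxs heu (Real.exp_pos _).le h)
    have h3 : a * Fu xs h u a ≤ a * (xs * M) := mul_le_mul_of_nonneg_left h2 ha0
    linarith
  have htb : t ≤ b * (xs * M) := by
    have h1 := Wu_sub_le h v le_rfl hb0
    rw [Wu_zero, hWvb, sub_zero, sub_zero] at h1
    have h2 : Fu xs h v b ≤ xs * M :=
      le_trans (Fu_le h v hb0) (mul_le_mul hbxs hev (Real.exp_pos _).le h)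
    have h3 : b * Fu xs h v b ≤ b * (xs * M) := mul_le_mul_of_nonneg_left h2 hb0
    linarith
  have ht₁xs : t₁ ≤ xs^2*M := by
    have h4 : a * (xs * M) ≤ xs * (xs * M) :=
      mul_le_mul_of_nonneg_right haxs (mul_nonneg h hM0.le)
    have h5 : xs * (xs * M) = xs^2*M := by ring
    linarith
  have ha_lb : t₁ / (xs * M) ≤ a := by
    rw [div_le_iff₀ (by positivity)]
    linarith
  have hb_lb : t₁ / (xs * M) ≤ b := by
    rw [div_le_iff₀ (by positivity)]
    linarith
  have hLpos : (0:ℝ) < t₁ / (xs * M^2) := by positivity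
  have hFua_lb : t₁ / (xs * M^2) ≤ Fu xs h u a := by
    have h1 := Fu_ge h u ha0
    have h2 : t₁/(xs*M) * M⁻¹ ≤ a * Real.exp (-‖u‖) :=
      mul_le_mul ha_lb heu' (by positivity) ha0
    have h3 : t₁/(xs*M) * M⁻¹ = t₁/(xs*M^2) := by
      rw [← div_eq_mul_inv, div_div, mul_assoc, ← pow_two]
    rw [h3] at h2; linarith
  have hFub_lb : t₁ / (xs * M^2) ≤ Fu xs h u b := by
    have h1 := Fu_ge h u hb0
    have h2 : t₁/(xs*M) * M⁻¹ ≤ b * Real.exp (-‖u‖) :=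
      mul_le_mul hb_lb heu' (by positivity) hb0
    have h3 : t₁/(xs*M) * M⁻¹ = t₁/(xs*M^2) := by
      rw [← div_eq_mul_inv, div_div, mul_assoc, ← pow_two]
    rw [h3] at h2; linarith
  have hFvb_lb : t₁ / (xs * M^2) ≤ Fu xs h v b := by
    have h1 := Fu_ge h v hb0
    have h2 : t₁/(xs*M) * M⁻¹ ≤ b * Real.exp (-‖v‖) :=
      mul_le_mul hb_lb hev' (by positivity) hb0
    have h3 : t₁/(xs*M) * M⁻¹ = t₁/(xs*M^2) := by
      rw [← div_eq_mul_inv, div_div, mul_assoc, ← pow_two]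
    rw [h3] at h2; linarith
  have hFua_pos : 0 < Fu xs h u a := lt_of_lt_of_le hLpos hFua_lb
  have hFvb_pos : 0 < Fu xs h v b := lt_of_lt_of_le hLpos hFvb_lb
  have hFua_inv : (Fu xs h u a)⁻¹ ≤ xs*M^2/t₁ := by
    have := inv_anti₀ hLpos hFua_lb
    rwa [inv_div] at this
  have hFvb_inv : (Fu xs h v b)⁻¹ ≤ xs*M^2/t₁ := by
    have := inv_anti₀ hLpos hFvb_lb
    rwa [inv_div] at this
  -- front difference
  have hWclose : |Wu xs h u b - Wu xs h v b| ≤ xs^2 * M * ε := by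
    have h1 := Wu_close h u v hb0 hbxs
    have h2 : xs*(M*ε)*b ≤ xs*(M*ε)*xs :=
      mul_le_mul_of_nonneg_left hbxs (by positivity)
    have h3 : xs*(M*ε)*xs = xs^2*M*ε := by ring
    linarith
  have hWab : |Wu xs h u a - Wu xs h u b| ≤ xs^2 * M * ε := by
    rw [hWua, ← hWvb, abs_sub_comm]
    exact hWclose
  have hab : |a - b| * t₁ ≤ xs^3 * M^3 * ε := by
    have hstep : |a - b| * (t₁ / (xs * M^2)) ≤ xs^2 * M * ε := by
      rcases le_total a b with hc | hc
      · have h1 := Wu_sub_ge h u ha0 hc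
        have h2 : (b - a) * (t₁ / (xs*M^2)) ≤ (b - a) * Fu xs h u a :=
          mul_le_mul_of_nonneg_left hFua_lb (by linarith)
        have h3 : |a - b| = b - a := by
          rw [abs_sub_comm]; exact abs_of_nonneg (by linarith)
        have h4 : Wu xs h u b - Wu xs h u a ≤ |Wu xs h u a - Wu xs h u b| := by
          rw [abs_sub_comm]; exact le_abs_self _
        rw [h3]; linarith
      · have h1 := Wu_sub_ge h u hb0 hc
        have h2 : (a - b) * (t₁ / (xs*M^2)) ≤ (a - b) * Fu xs h u b :=
          mul_le_mul_of_nonneg_left hFub_lb (by linarith)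
        have h3 : |a - b| = a - b := abs_of_nonneg (by linarith)
        have h4 : Wu xs h u a - Wu xs h u b ≤ |Wu xs h u a - Wu xs h u b| := le_abs_self _
        rw [h3]; linarith
    have hxM : (0:ℝ) < xs * M^2 := by positivity
    have h5 := mul_le_mul_of_nonneg_right hstep hxM.le
    have h6 : |a - b| * (t₁ / (xs * M^2)) * (xs*M^2) = |a - b| * t₁ := by
      rw [mul_assoc, div_mul_cancel₀ _ hxM.ne']
    have h7 : xs^2*M*ε*(xs*M^2) = xs^3*M^3*ε := by ring
    rw [h6, h7] at h5
    exact h5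
  -- case analysis
  by_cases h1 : xm ≤ a <;> by_cases h2 : xm ≤ b
  · -- both behind the front
    rw [if_pos h1, if_pos h2]
    have hn1 : |Fu xs h u xm - Fu xs h v xm| ≤ xs*M*ε := by
      have h3 := Fu_close h u v hxm0.le
      have h4 : xm*(M*ε) ≤ xs*(M*ε) :=
        mul_le_mul_of_nonneg_right hxm (by positivity)
      have h5 : xs*(M*ε) = xs*M*ε := by ring
      linarith
    have hFb : |Fu xs h u b - Fu xs h v b| ≤ xs*M*ε := by
      have h3 := Fu_close h u v hb0
      have h4 : b*(M*ε) ≤ xs*(M*ε) :=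
        mul_le_mul_of_nonneg_right hbxs (by positivity)
      have h5 : xs*(M*ε) = xs*M*ε := by ring
      linarith
    have hFuab : |Fu xs h u a - Fu xs h u b| ≤ M * |a - b| := by
      rcases le_total a b with hc | hc
      · rw [abs_sub_comm, abs_of_nonneg (sub_nonneg.2 (Fu_mono h u ha0 hc)),
          abs_sub_comm, abs_of_nonneg (sub_nonneg.2 hc)]
        have hs := Fu_sub_le h u hc
        have h3 : (b - a) * Real.exp ‖u‖ ≤ (b - a) * M :=
          mul_le_mul_of_nonneg_left heu (by linarith)
        have h4 : (b - a) * M = M * (b - a) := by ring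
        linarith
      · rw [abs_of_nonneg (sub_nonneg.2 (Fu_mono h u hb0 hc)),
          abs_of_nonneg (sub_nonneg.2 hc)]
        have hs := Fu_sub_le h u hc
        have h3 : (a - b) * Real.exp ‖u‖ ≤ (a - b) * M :=
          mul_le_mul_of_nonneg_left heu (by linarith)
        have h4 : (a - b) * M = M * (a - b) := by ring
        linarith
    have hΔ : |Fu xs h v b - Fu xs h u a| ≤ xs*M*ε + xs^3*M^4*ε/t₁ := by
      have htri : |Fu xs h v b - Fu xs h u a| ≤
          |Fu xs h v b - Fu xs h u b| + |Fu xs h u b - Fu xs h u a| := abs_sub_le _ _ _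
      have e1 : |Fu xs h v b - Fu xs h u b| = |Fu xs h u b - Fu xs h v b| := abs_sub_comm _ _
      have e2 : |Fu xs h u b - Fu xs h u a| = |Fu xs h u a - Fu xs h u b| := abs_sub_comm _ _
      have hM' : M * |a - b| ≤ xs^3*M^4*ε/t₁ := by
        rw [le_div_iff₀ ht₁]
        have h3 : M * (|a - b| * t₁) ≤ M * (xs^3*M^3*ε) :=
          mul_le_mul_of_nonneg_left hab hM0.le
        have h4 : M * (xs^3*M^3*ε) = xs^3*M^4*ε := by ring
        have h5 : M * |a - b| * t₁ = M * (|a - b| * t₁) := by ring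
        linarith
      rw [e1, e2] at htri
      linarith
    have hsplit : Fu xs h u xm / Fu xs h u a - Fu xs h v xm / Fu xs h v b
        = (Fu xs h u xm - Fu xs h v xm) * (Fu xs h u a)⁻¹
          + (Fu xs h v xm * (Fu xs h v b - Fu xs h u a)) * ((Fu xs h u a) * (Fu xs h v b))⁻¹ := by
      field_simp
      ring
    have hFvxm0 : 0 ≤ Fu xs h v xm := Fu_nonneg h v hxm0.le
    have hFvxm_le : Fu xs h v xm ≤ Fu xs h v b := Fu_mono h v hxm0.le h2
    have habs : |Fu xs h u xm / Fu xs h u a - Fu xs h v xm / Fu xs h v b|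
        ≤ (|Fu xs h u xm - Fu xs h v xm| + |Fu xs h v b - Fu xs h u a|) * (Fu xs h u a)⁻¹ := by
      rw [hsplit]
      have t1 : |(Fu xs h u xm - Fu xs h v xm) * (Fu xs h u a)⁻¹|
          = |Fu xs h u xm - Fu xs h v xm| * (Fu xs h u a)⁻¹ := by
        rw [abs_mul, abs_of_nonneg (inv_nonneg.2 hFua_pos.le)]
      have t2 : |(Fu xs h v xm * (Fu xs h v b - Fu xs h u a)) * ((Fu xs h u a) * (Fu xs h v b))⁻¹|
          ≤ |Fu xs h v b - Fu xs h u a| * (Fu xs h u a)⁻¹ := by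
        rw [abs_mul, abs_mul, abs_of_nonneg hFvxm0,
          abs_of_nonneg (inv_nonneg.2 (mul_nonneg hFua_pos.le hFvb_pos.le)), mul_inv]
        have h9 : Fu xs h v xm * (Fu xs h v b)⁻¹ ≤ 1 := by
          rw [← div_eq_mul_inv]
          exact div_le_one_of_le₀ hFvxm_le hFvb_pos.le
        have h10 : 0 ≤ |Fu xs h v b - Fu xs h u a| * (Fu xs h u a)⁻¹ :=
          mul_nonneg (abs_nonneg _) (inv_nonneg.2 hFua_pos.le)
        have h11 : (|Fu xs h v b - Fu xs h u a| * (Fu xs h u a)⁻¹) * (Fu xs h v xm * (Fu xs h v b)⁻¹)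
            ≤ (|Fu xs h v b - Fu xs h u a| * (Fu xs h u a)⁻¹) * 1 :=
          mul_le_mul_of_nonneg_left h9 h10
        have h12 : Fu xs h v xm * |Fu xs h v b - Fu xs h u a| * ((Fu xs h u a)⁻¹ * (Fu xs h v b)⁻¹)
            = (|Fu xs h v b - Fu xs h u a| * (Fu xs h u a)⁻¹) * (Fu xs h v xm * (Fu xs h v b)⁻¹) := by
          ring
        rw [h12]
        linarith
      calc |(Fu xs h u xm - Fu xs h v xm) * (Fu xs h u a)⁻¹
            + (Fu xs h v xm * (Fu xs h v b - Fu xs h u a)) * ((Fu xs h u a) * (Fu xs h v b))⁻¹|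
          ≤ |(Fu xs h u xm - Fu xs h v xm) * (Fu xs h u a)⁻¹|
            + |(Fu xs h v xm * (Fu xs h v b - Fu xs h u a)) * ((Fu xs h u a) * (Fu xs h v b))⁻¹| :=
            abs_add_le _ _
        _ ≤ (|Fu xs h u xm - Fu xs h v xm| + |Fu xs h v b - Fu xs h u a|) * (Fu xs h u a)⁻¹ := by
            rw [t1, add_mul]; linarith
    have hmain : |Fu xs h u xm / Fu xs h u a - Fu xs h v xm / Fu xs h v b|
        ≤ (xs*M*ε + (xs*M*ε + xs^3*M^4*ε/t₁)) * (xs*M^2/t₁) := by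
      refine le_trans habs (mul_le_mul (by linarith) hFua_inv (inv_nonneg.2 hFua_pos.le) ?_)
      positivity
    have efinal : (2 - Fu xs h u xm / Fu xs h u a) - (2 - Fu xs h v xm / Fu xs h v b)
        = -(Fu xs h u xm / Fu xs h u a - Fu xs h v xm / Fu xs h v b) := by ring
    rw [efinal, abs_neg]
    exact le_trans hmain (arith1 xs t₁ M ε E hxs ht₁ hM1 hε0 hE1 ht₁xs)
  · -- xm ≤ a, b < xm
    rw [if_pos h1, if_neg h2]
    push_neg at h2
    have hP1 : Fu xs h u xm / Fu xs h u a ≤ 1 :=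
      div_le_one_of_le₀ (Fu_mono h u hxm0.le h1) hFua_pos.le
    have e1 : (2:ℝ) - Fu xs h u xm / Fu xs h u a - 1 = 1 - Fu xs h u xm / Fu xs h u a := by ring
    rw [e1, abs_of_nonneg (by linarith)]
    have e2 : 1 - Fu xs h u xm / Fu xs h u a = (Fu xs h u a - Fu xs h u xm) * (Fu xs h u a)⁻¹ := by
      field_simp
    have h6 : Fu xs h u a - Fu xs h u xm ≤ M * (a - b) := by
      have hs := Fu_sub_le h u h1
      have s1 : (a - xm) * Real.exp ‖u‖ ≤ (a - xm) * M :=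
        mul_le_mul_of_nonneg_left heu (by linarith)
      have s2 : (a - xm) * M ≤ (a - b) * M :=
        mul_le_mul_of_nonneg_right (by linarith) hM0.le
      have s3 : (a - b) * M = M * (a - b) := by ring
      linarith
    have hD : (Fu xs h u a - Fu xs h u xm) * (Fu xs h u a)⁻¹ ≤ (M * (a - b)) * (xs*M^2/t₁) := by
      apply mul_le_mul h6 hFua_inv (inv_nonneg.2 hFua_pos.le)
      exact mul_nonneg hM0.le (by linarith)
    rw [e2]
    refine le_trans hD (arith2 xs t₁ M ε E _ hxs ht₁ hM1 hε0 hE1 ht₁xs ?_)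
    have hab' : (a - b) * t₁ ≤ xs^3*M^3*ε := by
      have s1 : (a - b) * t₁ ≤ |a - b| * t₁ :=
        mul_le_mul_of_nonneg_right (le_abs_self _) ht₁.le
      linarith
    have e3 : (M * (a - b)) * (xs*M^2/t₁) * t₁^2 = xs*M^3*((a - b)*t₁) := by
      field_simp
    rw [e3]
    have s2 : xs*M^3*((a - b)*t₁) ≤ xs*M^3*(xs^3*M^3*ε) :=
      mul_le_mul_of_nonneg_left hab' (by positivity)
    have s3 : xs*M^3*(xs^3*M^3*ε) = xs^4*M^6*ε := by ring
    linarith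
  · -- a < xm ≤ b
    rw [if_neg h1, if_pos h2]
    push_neg at h1
    have hP1 : Fu xs h v xm / Fu xs h v b ≤ 1 :=
      div_le_one_of_le₀ (Fu_mono h v hxm0.le h2) hFvb_pos.le
    have e1 : (1:ℝ) - (2 - Fu xs h v xm / Fu xs h v b) = -(1 - Fu xs h v xm / Fu xs h v b) := by
      ring
    rw [e1, abs_neg, abs_of_nonneg (by linarith)]
    have e2 : 1 - Fu xs h v xm / Fu xs h v b = (Fu xs h v b - Fu xs h v xm) * (Fu xs h v b)⁻¹ := by
      field_simp
    have h6 : Fu xs h v b - Fu xs h v xm ≤ M * (b - a) := by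
      have hs := Fu_sub_le h v h2
      have s1 : (b - xm) * Real.exp ‖v‖ ≤ (b - xm) * M :=
        mul_le_mul_of_nonneg_left hev (by linarith)
      have s2 : (b - xm) * M ≤ (b - a) * M :=
        mul_le_mul_of_nonneg_right (by linarith) hM0.le
      have s3 : (b - a) * M = M * (b - a) := by ring
      linarith
    have hD : (Fu xs h v b - Fu xs h v xm) * (Fu xs h v b)⁻¹ ≤ (M * (b - a)) * (xs*M^2/t₁) := by
      apply mul_le_mul h6 hFvb_inv (inv_nonneg.2 hFvb_pos.le)
      exact mul_nonneg hM0.le (by linarith)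
    rw [e2]
    refine le_trans hD (arith2 xs t₁ M ε E _ hxs ht₁ hM1 hε0 hE1 ht₁xs ?_)
    have hab' : (b - a) * t₁ ≤ xs^3*M^3*ε := by
      have s0 : b - a ≤ |a - b| := by rw [abs_sub_comm]; exact le_abs_self _
      have s1 : (b - a) * t₁ ≤ |a - b| * t₁ :=
        mul_le_mul_of_nonneg_right s0 ht₁.le
      linarith
    have e3 : (M * (b - a)) * (xs*M^2/t₁) * t₁^2 = xs*M^3*((b - a)*t₁) := by
      field_simp
    rw [e3]
    have s2 : xs*M^3*((b - a)*t₁) ≤ xs*M^3*(xs^3*M^3*ε) :=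
      mul_le_mul_of_nonneg_left hab' (by positivity)
    have s3 : xs*M^3*(xs^3*M^3*ε) = xs^4*M^6*ε := by ring
    linarith
  · -- ahead of both fronts
    rw [if_neg h1, if_neg h2, sub_self, abs_zero]
    positivity
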